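/- arXiv:2303.01326 — 3 statements merged into one kernel-verified Lean document; each statement's English description precedes it below -/
import Mathlib

section
/- Let Σ̂⁽¹⁾, Σ̂⁽²⁾ be symmetric p×p real matrices and λ, ρ ≥ 0. If (Θ̂⁽¹⁾, Θ̂⁽²⁾) minimizes the fused graphical lasso objective F(Θ₁,Θ₂) = Σ_{k=1}² [tr(Σ̂⁽ᵏ⁾Θ_k) − log det Θ_k] + λ Σ_{k=1}² ‖Θ_k⁻‖₁ + ρ ‖Θ₁⁻ − Θ₂⁻‖₁ over pairs of symmetric positive definite matrices, then there exist p×p matrices Z₁, Z₂, Z₁₂ with zero diagonals and ‖Z₁‖_∞ ≤ 1, ‖Z₂‖_∞ ≤ 1, ‖Z₁₂‖_∞ ≤ 1, such that Σ̂⁽¹⁾ − (Θ̂⁽¹⁾)⁻¹ + λZ₁ + ρZ₁₂ = 0 and Σ̂⁽²⁾ − (Θ̂⁽²⁾)⁻¹ + λZ₂ − ρZ₁₂ = 0; moreover (Z₁)_{ij} = sign((Θ̂⁽¹⁾)_{ij}) whenever i ≠ j and (Θ̂⁽¹⁾)_{ij} ≠ 0, (Z₂)_{ij} = sign((Θ̂⁽²⁾)_{ij})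 whenever i ≠ j and (Θ̂⁽²⁾)_{ij} ≠ 0, and (Z₁₂)_{ij} = sign((Θ̂⁽¹⁾ − Θ̂⁽²⁾)_{ij}) whenever i ≠ j and (Θ̂⁽¹⁾ − Θ̂⁽²⁾)_{ij} ≠ 0. -/
open Matrix
open scoped BigOperators Classical

noncomputable section

/-- Frobenius norm squared: `‖A‖_F² = Σ_{i,j} A_{ij}²`. -/
def frobSq {p : ℕ} (A : Matrix (Fin p) (Fin p) ℝ) : ℝ := ∑ i, ∑ j, (A i j) ^ 2

/-- Frobenius norm `‖A‖_F = (Σ_{i,j} A_{ij}²)^{1/2}`. -/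
def frobNorm {p : ℕ} (A : Matrix (Fin p) (Fin p) ℝ) : ℝ := Real.sqrt (frobSq A)

/-- Entrywise ℓ₁ norm `‖A‖₁ = Σ_{i,j} |A_{ij}|`. -/
def l1Norm {p : ℕ} (A : Matrix (Fin p) (Fin p) ℝ) : ℝ := ∑ i, ∑ j, |A i j|

/-- Entrywise supremum norm `‖A‖_∞ = max_{i,j} |A_{ij}|`. -/
def supNorm {p : ℕ} (A : Matrix (Fin p) (Fin p) ℝ) : ℝ := ⨆ i, ⨆ j, |A i j|

/-- ℓ₁-operator norm `|||A|||₁ = max_j Σ_i |A_{ij}|`. -/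
def opNorm1 {p : ℕ} (A : Matrix (Fin p) (Fin p) ℝ) : ℝ := ⨆ j, ∑ i, |A i j|

/-- `A⁺`: the diagonal matrix with the same diagonal as `A`. -/
def diagPart {p : ℕ} (A : Matrix (Fin p) (Fin p) ℝ) : Matrix (Fin p) (Fin p) ℝ :=
  Matrix.diagonal (fun i => A i i)

/-- `A⁻ = A − A⁺`: the off-diagonal part of `A`. -/
def offDiagPart {p : ℕ} (A : Matrix (Fin p) (Fin p) ℝ) : Matrix (Fin p) (Fin p) ℝ :=
  A - diagPart A

/-- Number of off-diagonal nonzero entries of `A`: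
`s = #{(i,j) : i ≠ j, A_{ij} ≠ 0}`. -/
def sparsity {p : ℕ} (A : Matrix (Fin p) (Fin p) ℝ) : ℕ :=
  (Finset.univ.filter (fun ij : Fin p × Fin p => ij.1 ≠ ij.2 ∧ A ij.1 ij.2 ≠ 0)).card

/-- Fused graphical lasso objective for `K` groups:
`F(Θ₁,…,Θ_K) = Σ_k [tr(Σ̂⁽ᵏ⁾Θ_k) − log det Θ_k] + λ Σ_k ‖Θ_k⁻‖₁
  + ρ Σ_{k<k'} ‖Θ_k⁻ − Θ_{k'}⁻‖₁`. -/
def objFGL {p K : ℕ} (S : Fin K → Matrix (Fin p) (Fin p) ℝ) (lam rho : ℝ)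
    (Θ : Fin K → Matrix (Fin p) (Fin p) ℝ) : ℝ :=
  ∑ k, (Matrix.trace (S k * Θ k) - Real.log (Θ k).det)
    + lam * ∑ k, l1Norm (offDiagPart (Θ k))
    + rho * ∑ k, ∑ k', if k < k' then l1Norm (offDiagPart (Θ k) - offDiagPart (Θ k')) else 0

/-! ### Auxiliary lemmas -/

lemma quad_cont {p : ℕ} (M : Matrix (Fin p) (Fin p) ℝ) :
    Continuous fun x : Fin p → ℝ => x ⬝ᵥ M *ᵥ x := by
  simp only [Matrix.mulVec, dotProduct]
  exact continuous_finset_sum _ fun a _ =>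
    (continuous_apply a).mul (continuous_finset_sum _ fun b _ =>
      (continuous_const.mul (continuous_apply b)))

lemma herm_add_smul {p : ℕ} {Θ E : Matrix (Fin p) (Fin p) ℝ} (hΘ : Θ.IsHermitian)
    (hE : E.IsHermitian) (u : ℝ) : (Θ + u • E).IsHermitian := by
  unfold Matrix.IsHermitian at *
  rw [conjTranspose_add, conjTranspose_smul, hΘ, hE, star_trivial]

lemma herm_smul {p : ℕ} {E : Matrix (Fin p) (Fin p) ℝ} (hE : E.IsHermitian) (c : ℝ) :
    (c • E).IsHermitian := by
  unfold Matrix.IsHermitian at *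
  rw [conjTranspose_smul, hE, star_trivial]

lemma herm_entry {p : ℕ} {A : Matrix (Fin p) (Fin p) ℝ} (h : A.IsHermitian) (i j : Fin p) :
    A j i = A i j := by
  have := congrFun (congrFun h i) j
  rwa [Matrix.conjTranspose_apply, star_trivial] at this

lemma posDef_perturb {p : ℕ} {Θ : Matrix (Fin p) (Fin p) ℝ} (E : Matrix (Fin p) (Fin p) ℝ)
    (hΘ : Θ.PosDef) (hE : E.IsHermitian) :
    ∃ ε > 0, ∀ u : ℝ, |u| < ε → (Θ + u • E).PosDef := by
  rcases Nat.eq_zero_or_pos p with hp | hp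
  · refine ⟨1, one_pos, fun u _ => ⟨herm_add_smul hΘ.1 hE u, fun x hx => ?_⟩⟩
    exfalso; apply hx; ext i; exact absurd i.2 (by omega)
  · have : Nontrivial (Fin p → ℝ) := by
      have : Nonempty (Fin p) := ⟨⟨0, hp⟩⟩
      infer_instance
    obtain ⟨x₀, hx₀S, hx₀min⟩ := (isCompact_sphere (0 : Fin p → ℝ) 1).exists_isMinOn
      (NormedSpace.sphere_nonempty.2 zero_le_one)
      ((quad_cont Θ).continuousOn)
    obtain ⟨x₁, hx₁S, hx₁max⟩ := (isCompact_sphere (0 : Fin p → ℝ) 1).exists_isMaxOn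
      (NormedSpace.sphere_nonempty.2 zero_le_one)
      (((quad_cont E).abs).continuousOn)
    set μ := x₀ ⬝ᵥ Θ *ᵥ x₀ with hμ
    set C := |x₁ ⬝ᵥ E *ᵥ x₁| with hC
    have hx₀ne : x₀ ≠ 0 := by
      intro h; rw [h] at hx₀S; simp at hx₀S
    have hμpos : 0 < μ := by
      have := hΘ.dotProduct_mulVec_pos hx₀ne; rwa [star_trivial] at this
    have hC0 : 0 ≤ C := abs_nonneg _
    refine ⟨μ / (C + 1), div_pos hμpos (by linarith), fun u hu => ?_⟩
    refine Matrix.PosDef.of_dotProduct_mulVec_pos (herm_add_smul hΘ.1 hE u) fun x hx => ?_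
    have hxn : 0 < ‖x‖ := norm_pos_iff.2 hx
    set y := ‖x‖⁻¹ • x with hy
    have hyS : y ∈ Metric.sphere (0 : Fin p → ℝ) 1 := by
      simp [hy, norm_smul, abs_of_nonneg (inv_nonneg.2 hxn.le), inv_mul_cancel₀ hxn.ne']
    have hxy : x = ‖x‖ • y := by rw [hy, smul_smul, mul_inv_cancel₀ hxn.ne', one_smul]
    have key : ∀ (M : Matrix (Fin p) (Fin p) ℝ) (c : ℝ) (z : Fin p → ℝ),
        (c • z) ⬝ᵥ M *ᵥ (c • z) = c * (c * (z ⬝ᵥ M *ᵥ z)) := by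
      intro M c z
      simp [Matrix.mulVec_smul, smul_dotProduct, dotProduct_smul, smul_eq_mul]
    have hexp : x ⬝ᵥ (Θ + u • E) *ᵥ x = ‖x‖ * (‖x‖ * (y ⬝ᵥ Θ *ᵥ y + u * (y ⬝ᵥ E *ᵥ y))) := by
      conv_lhs => rw [hxy, key]
      congr 2
      simp [Matrix.add_mulVec, dotProduct_add, Matrix.smul_mulVec,
        dotProduct_smul, smul_eq_mul]
    rw [star_trivial, hexp]
    have h1 : μ ≤ y ⬝ᵥ Θ *ᵥ y := hx₀min hyS
    have h2 : |y ⬝ᵥ E *ᵥ y| ≤ C := hx₁max hyS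
    have h3 : |u * (y ⬝ᵥ E *ᵥ y)| < μ := by
      rw [abs_mul]
      calc |u| * |y ⬝ᵥ E *ᵥ y| ≤ |u| * C := by
            exact mul_le_mul_of_nonneg_left h2 (abs_nonneg u)
        _ ≤ |u| * (C + 1) := by nlinarith [abs_nonneg u]
        _ < μ / (C + 1) * (C + 1) := by
            apply mul_lt_mul_of_pos_right hu; linarith
        _ = μ := by field_simp
    have hpos : 0 < y ⬝ᵥ Θ *ᵥ y + u * (y ⬝ᵥ E *ᵥ y) := by
      have := neg_abs_le (u * (y ⬝ᵥ E *ᵥ y))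
      linarith
    exact mul_pos hxn (mul_pos hxn hpos)

open Polynomial in
lemma hasDerivAt_smooth {p : ℕ} (S Θ E : Matrix (Fin p) (Fin p) ℝ) (hΘ : Θ.PosDef) :
    HasDerivAt (fun u : ℝ => Matrix.trace (S * (Θ + u • E)) - Real.log (Θ + u • E).det)
      (Matrix.trace (S * E) - Matrix.trace (Θ⁻¹ * E)) 0 := by
  have hdet : (0:ℝ) < Θ.det := hΘ.det_pos
  have hunit : IsUnit Θ.det := (ne_of_gt hdet).isUnit
  set B := Θ⁻¹ * E with hB
  have hfac : ∀ u : ℝ, Θ + u • E = Θ * (1 + u • B) := by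
    intro u
    rw [hB, mul_add, mul_one, Matrix.mul_smul, ← Matrix.mul_assoc,
      Matrix.mul_nonsing_inv _ hunit, Matrix.one_mul]
  set q := (det (1 + (X : ℝ[X]) • B.map C)).divX.divX with hq
  have hdet2 : ∀ u : ℝ, (Θ + u • E).det = Θ.det * (1 + Matrix.trace B * u + q.eval u * u ^ 2) := by
    intro u
    rw [hfac u, Matrix.det_mul, Matrix.det_one_add_smul]
  have hd : HasDerivAt (fun u : ℝ => Θ.det * (1 + Matrix.trace B * u + q.eval u * u ^ 2))
      (Θ.det * Matrix.trace B) 0 := by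
    have h1 : HasDerivAt (fun u : ℝ => 1 + Matrix.trace B * u + q.eval u * u ^ 2)
        (Matrix.trace B) 0 := by
      have ha : HasDerivAt (fun u : ℝ => 1 + Matrix.trace B * u) (Matrix.trace B) 0 := by
        simpa using ((hasDerivAt_id (0:ℝ)).const_mul (Matrix.trace B)).const_add 1
      have hb : HasDerivAt (fun u : ℝ => q.eval u * u ^ 2)
          (q.derivative.eval 0 * 0 ^ 2 + q.eval 0 * (2 * 0 ^ 1)) 0 :=
        (q.hasDerivAt 0).mul (hasDerivAt_pow 2 0)
      exact (ha.add hb).congr_deriv (by simp)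
    simpa using h1.const_mul Θ.det
  have hlog : HasDerivAt (fun u : ℝ => Real.log (Θ + u • E).det) (Matrix.trace B) 0 := by
    have h0 : Θ.det * (1 + Matrix.trace B * 0 + q.eval 0 * 0 ^ 2) ≠ 0 := by
      simpa using (ne_of_gt hdet)
    have := hd.log h0
    simp only [mul_zero, add_zero, zero_pow, ne_eq, OfNat.ofNat_ne_zero,
      not_false_eq_true] at this
    have heq : (fun u : ℝ => Real.log (Θ.det * (1 + Matrix.trace B * u + q.eval u * u ^ 2)))
        = fun u : ℝ => Real.log (Θ + u • E).det := by
      funext u; rw [hdet2 u]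
    rw [heq] at this
    convert this using 1
    field_simp
  have htr : HasDerivAt (fun u : ℝ => Matrix.trace (S * (Θ + u • E))) (Matrix.trace (S * E)) 0 := by
    have heq : (fun u : ℝ => Matrix.trace (S * (Θ + u • E)))
        = fun u : ℝ => Matrix.trace (S * Θ) + Matrix.trace (S * E) * u := by
      funext u
      rw [mul_add, Matrix.trace_add, Matrix.mul_smul, Matrix.trace_smul, smul_eq_mul, mul_comm]
    rw [heq]
    simpa using ((hasDerivAt_id (0:ℝ)).const_mul (Matrix.trace (S * E))).const_add
      (Matrix.trace (S * Θ))
  exact htr.sub hlog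

def Eij {p : ℕ} (i j : Fin p) : Matrix (Fin p) (Fin p) ℝ :=
  Matrix.single i j 1 + Matrix.single j i 1

lemma Eij_apply {p : ℕ} (i j a b : Fin p) (hij : i ≠ j) :
    Eij i j a b = (if a = i ∧ b = j then 1 else 0) + (if a = j ∧ b = i then 1 else 0) := by
  simp only [Eij, Matrix.add_apply, Matrix.single, of_apply]
  by_cases h1 : i = a <;> by_cases h2 : j = b <;> by_cases h3 : j = a <;> by_cases h4 : i = b <;>
    simp [h1, h2, h3, h4, eq_comm]

lemma Eij_herm {p : ℕ} (i j : Fin p) : (Eij i j).IsHermitian := by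
  unfold Matrix.IsHermitian Eij
  ext a b
  simp only [Matrix.conjTranspose_apply, Matrix.add_apply, Matrix.single, of_apply,
    star_trivial]
  by_cases h1 : i = a <;> by_cases h2 : j = b <;> by_cases h3 : j = a <;> by_cases h4 : i = b <;>
    simp [h1, h2, h3, h4, and_comm] <;> exact add_comm _ _

lemma std_diag_herm {p : ℕ} (i : Fin p) : (Matrix.single i i (1:ℝ)).IsHermitian := by
  unfold Matrix.IsHermitian
  ext a b
  simp only [Matrix.conjTranspose_apply, Matrix.single, of_apply, star_trivial]
  by_cases h1 : i = a <;> by_cases h2 : i = b <;> simp [h1, h2]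

lemma trace_mul_std {p : ℕ} (S : Matrix (Fin p) (Fin p) ℝ) (i j : Fin p) :
    Matrix.trace (S * Matrix.single i j 1) = S j i := by
  simp only [Matrix.trace, Matrix.diag, Matrix.mul_apply, Matrix.single, of_apply]
  rw [Finset.sum_comm]
  simp [Finset.sum_ite_eq, ite_and]

lemma trace_mul_Eij {p : ℕ} (S : Matrix (Fin p) (Fin p) ℝ) (i j : Fin p) :
    Matrix.trace (S * Eij i j) = S j i + S i j := by
  rw [Eij, mul_add, Matrix.trace_add, trace_mul_std, trace_mul_std]

lemma offDiagPart_apply {p : ℕ} (A : Matrix (Fin p) (Fin p) ℝ) (a b : Fin p) :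
    offDiagPart A a b = if a = b then 0 else A a b := by
  simp only [offDiagPart, diagPart, Matrix.sub_apply, Matrix.diagonal_apply]
  split_ifs with h <;> simp [h]

lemma offDiagPart_add_smul_Eij {p : ℕ} (A : Matrix (Fin p) (Fin p) ℝ) {i j : Fin p}
    (hij : i ≠ j) (c : ℝ) :
    offDiagPart (A + c • Eij i j) = offDiagPart A + c • Eij i j := by
  ext a b
  simp only [offDiagPart_apply, Matrix.add_apply, Matrix.smul_apply, smul_eq_mul]
  split_ifs with h
  · subst h
    have h1 : ¬(a = i ∧ a = j) := by rintro ⟨rfl, rfl⟩; exact hij rfl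
    have h2 : ¬(a = j ∧ a = i) := by rintro ⟨rfl, rfl⟩; exact hij rfl
    rw [Eij_apply _ _ _ _ hij, if_neg h1, if_neg h2]
    ring
  · ring

lemma offDiagPart_add_smul_diag {p : ℕ} (A : Matrix (Fin p) (Fin p) ℝ) (i : Fin p) (c : ℝ) :
    offDiagPart (A + c • Matrix.single i i 1) = offDiagPart A := by
  ext a b
  simp only [offDiagPart_apply, Matrix.add_apply, Matrix.smul_apply, smul_eq_mul]
  split_ifs with h
  · rfl
  · have : Matrix.single i i (1:ℝ) a b = 0 := by
      apply Matrix.single_apply_of_ne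
      rintro ⟨rfl, rfl⟩; exact h rfl
    rw [this]; ring

lemma l1Norm_sum_prod {p : ℕ} (X : Matrix (Fin p) (Fin p) ℝ) :
    l1Norm X = ∑ P : Fin p × Fin p, |X P.1 P.2| := by
  rw [l1Norm, ← Finset.sum_product']
  rfl

lemma l1Norm_add_smul_Eij {p : ℕ} (M : Matrix (Fin p) (Fin p) ℝ) {i j : Fin p}
    (hij : i ≠ j) (c : ℝ) :
    l1Norm (M + c • Eij i j)
      = l1Norm M - |M i j| - |M j i| + |M i j + c| + |M j i + c| := by
  have hne : ((i,j) : Fin p × Fin p) ≠ (j,i) := by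
    intro h
    exact hij (congrArg Prod.fst h)
  have happly : ∀ a b : Fin p, (M + c • Eij i j) a b
      = M a b + (if a = i ∧ b = j then c else 0) + (if a = j ∧ b = i then c else 0) := by
    intro a b
    simp only [Matrix.add_apply, Matrix.smul_apply, Eij_apply _ _ _ _ hij, smul_eq_mul]
    split_ifs <;> ring
  have key : ∀ X : Matrix (Fin p) (Fin p) ℝ,
      l1Norm X = (∑ P ∈ (((Finset.univ : Finset (Fin p × Fin p)).erase (i,j)).erase (j,i)),
        |X P.1 P.2|) + |X j i| + |X i j| := by
    intro X
    rw [l1Norm_sum_prod]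
    rw [← Finset.sum_erase_add _ _ (Finset.mem_univ (i,j)),
      ← Finset.sum_erase_add _ _ (Finset.mem_erase.2 ⟨Ne.symm hne, Finset.mem_univ _⟩)]
  rw [key (M + c • Eij i j), key M]
  have hcongr : ∑ P ∈ (((Finset.univ : Finset (Fin p × Fin p)).erase (i,j)).erase (j,i)),
      |(M + c • Eij i j) P.1 P.2|
      = ∑ P ∈ (((Finset.univ : Finset (Fin p × Fin p)).erase (i,j)).erase (j,i)),
      |M P.1 P.2| := by
    apply Finset.sum_congr rfl
    intro P hP
    rw [Finset.mem_erase, Finset.mem_erase] at hP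
    rw [happly]
    have h1 : ¬(P.1 = i ∧ P.2 = j) := by
      rintro ⟨h1, h2⟩; exact hP.2.1 (Prod.ext h1 h2)
    have h2 : ¬(P.1 = j ∧ P.2 = i) := by
      rintro ⟨h1, h2⟩; exact hP.1 (Prod.ext h1 h2)
    simp [h1, h2]
  rw [hcongr, happly j i, happly i j]
  have e1 : ¬(j = i ∧ i = j) := fun h => hij h.2
  have e2 : ¬(i = j ∧ j = i) := fun h => hij h.1
  simp [e1, e2, hij, Ne.symm hij]
  ring

/-- one-sided directional derivative of `|·|` at `x` in direction `h`. -/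
def absD (x h : ℝ) : ℝ := if x = 0 then |h| else Real.sign x * h

lemma absD_zero (x : ℝ) : absD x 0 = 0 := by
  simp [absD]

lemma absD_slope (x h : ℝ) : ∃ δ > 0, ∀ u : ℝ, 0 < u → u < δ →
    |x + u * h| - |x| = u * absD x h := by
  by_cases hx : x = 0
  · refine ⟨1, one_pos, fun u hu _ => ?_⟩
    simp [hx, absD, abs_mul, abs_of_pos hu]
  · refine ⟨|x| / (|h| + 1), by positivity, fun u hu hud => ?_⟩
    have hbound : u * |h| < |x| := by
      calc u * |h| ≤ u * (|h| + 1) := by nlinarith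
        _ < |x| / (|h| + 1) * (|h| + 1) := by
            apply mul_lt_mul_of_pos_right hud; positivity
        _ = |x| := by field_simp
    rcases lt_or_gt_of_ne hx with hneg | hpos
    · have habs : |x| = -x := abs_of_neg hneg
      have h1 : x + u * h < 0 := by
        have : u * h ≤ u * |h| := by nlinarith [le_abs_self h]
        linarith [habs ▸ hbound]
      rw [abs_of_neg h1, absD, if_neg hx, Real.sign_of_neg hneg, habs]
      ring
    · have habs : |x| = x := abs_of_pos hpos
      have h1 : 0 < x + u * h := by
        have : -(u * h) ≤ u * |h| := by nlinarith [neg_abs_le h]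
        linarith [habs ▸ hbound]
      rw [abs_of_pos h1, absD, if_neg hx, Real.sign_of_pos hpos, habs]
      ring

lemma exists_mul_eq {m c : ℝ} (hm : 0 ≤ m) (h : |c| ≤ m) : ∃ z : ℝ, |z| ≤ 1 ∧ m * z = c := by
  rcases eq_or_lt_of_le hm with hm0 | hm0
  · refine ⟨0, by norm_num, ?_⟩
    have : c = 0 := by rw [abs_le] at h; linarith
    simp [this, ← hm0]
  · refine ⟨c / m, ?_, by field_simp⟩
    rw [abs_div, abs_of_pos hm0, div_le_one hm0]
    exact h

lemma abs_sign_le_one (x : ℝ) : |Real.sign x| ≤ 1 := by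
  rcases lt_trichotomy x 0 with h | h | h
  · rw [Real.sign_of_neg h]; norm_num
  · rw [h, Real.sign_zero]; norm_num
  · rw [Real.sign_of_pos h]; norm_num

lemma scalar_KKT (lam rho a b α β : ℝ) (hlam : 0 ≤ lam) (hrho : 0 ≤ rho)
    (H : ∀ s t : ℝ, α * s + β * t ≤ lam * absD a s + lam * absD b t + rho * absD (a - b) (s - t)) :
    ∃ z : ℝ × ℝ × ℝ, |z.1| ≤ 1 ∧ |z.2.1| ≤ 1 ∧ |z.2.2| ≤ 1 ∧
      lam * z.1 + rho * z.2.2 = α ∧ lam * z.2.1 - rho * z.2.2 = β ∧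
      (a ≠ 0 → z.1 = Real.sign a) ∧ (b ≠ 0 → z.2.1 = Real.sign b) ∧
      (a - b ≠ 0 → z.2.2 = Real.sign (a - b)) := by
  by_cases hab : a - b = 0
  · have hba : b = a := by linarith [sub_eq_zero.mp hab]
    by_cases ha : a = 0
    · have hb : b = 0 := by rw [hba, ha]
      have k1 : |α| ≤ lam + rho := by
        rw [abs_le]; constructor
        · have := H (-1) 0; simp [absD, ha, hb, hab] at this; linarith
        · have := H 1 0; simp [absD, ha, hb, hab] at this; linarith
      have k2 : |β| ≤ lam + rho := by
        rw [abs_le]; constructor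
        · have := H 0 (-1); simp [absD, ha, hb, hab] at this; linarith
        · have := H 0 1; simp [absD, ha, hb, hab] at this; linarith
      have k3 : |α + β| ≤ 2 * lam := by
        rw [abs_le]; constructor
        · have := H (-1) (-1); simp [absD, ha, hb, hab] at this; linarith
        · have := H 1 1; simp [absD, ha, hb, hab] at this; linarith
      rw [abs_le] at k1 k2 k3
      set w := max (α - lam) (max (-β - lam) (-rho)) with hw
      have hw1 : α - lam ≤ w := le_max_left _ _
      have hw2 : -β - lam ≤ w := le_max_of_le_right (le_max_left _ _)
      have hw3 : -rho ≤ w := le_max_of_le_right (le_max_right _ _)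
      have hw4 : w ≤ α + lam := by
        rw [hw]
        apply max_le (by linarith) (max_le (by linarith) (by linarith))
      have hw5 : w ≤ -β + lam := by
        rw [hw]
        apply max_le (by linarith) (max_le (by linarith) (by linarith))
      have hw6 : w ≤ rho := by
        rw [hw]
        apply max_le (by linarith) (max_le (by linarith) (by linarith))
      obtain ⟨z12, hz12, hz12e⟩ := exists_mul_eq hrho (abs_le.2 ⟨hw3, hw6⟩)
      obtain ⟨z1, hz1, hz1e⟩ := exists_mul_eq hlam (abs_le.2 ⟨by linarith, by linarith⟩ :
        |α - w| ≤ lam)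
      obtain ⟨z2, hz2, hz2e⟩ := exists_mul_eq hlam (abs_le.2 ⟨by linarith, by linarith⟩ :
        |β + w| ≤ lam)
      exact ⟨⟨z1, z2, z12⟩, hz1, hz2, hz12,
        by rw [hz1e, hz12e]; ring, by rw [hz2e, hz12e]; ring,
        fun h => (h ha).elim, fun h => (h hb).elim, fun h => (h hab).elim⟩
    · have hsa : Real.sign a * a = |a| := by
        rcases lt_or_gt_of_ne ha with h | h
        · rw [Real.sign_of_neg h, abs_of_neg h]; ring
        · rw [Real.sign_of_pos h, abs_of_pos h]; ring
      have hDa : ∀ s, absD a s = Real.sign a * s := fun s => if_neg ha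
      have hb : b ≠ 0 := by rw [hba]; exact ha
      have e1 : α + β = 2 * lam * Real.sign a := by
        have h1 := H 1 1
        have h2 := H (-1) (-1)
        rw [hba] at h1 h2
        rw [hDa] at h1 h2
        norm_num [absD_zero] at h1 h2
        linarith
      have e2 : |α - lam * Real.sign a| ≤ rho := by
        have h1 := H 1 0
        have h2 := H (-1) 0
        rw [hab] at h1 h2
        rw [hDa] at h1 h2
        norm_num [absD, absD_zero, abs_zero, mul_zero, ite_self] at h1 h2
        rw [abs_le]
        constructor <;> linarith
      obtain ⟨z12, hz12, hz12e⟩ := exists_mul_eq hrho e2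
      refine ⟨⟨Real.sign a, Real.sign b, z12⟩, abs_sign_le_one a, abs_sign_le_one b, hz12,
        by rw [hz12e]; ring, ?_, fun _ => rfl, fun _ => rfl, fun h => (h hab).elim⟩
      rw [hz12e, hba]
      linarith
  · have hDab : ∀ s, absD (a - b) s = Real.sign (a - b) * s := fun s => if_neg hab
    have key1 : ∃ z1 : ℝ, |z1| ≤ 1 ∧ lam * z1 = α - rho * Real.sign (a - b) ∧
        (a ≠ 0 → z1 = Real.sign a) := by
      by_cases ha : a = 0
      · have e : |α - rho * Real.sign (a - b)| ≤ lam := by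
          have h1 := H 1 0
          have h2 := H (-1) 0
          rw [hDab] at h1 h2
          rw [show absD a (1:ℝ) = 1 by simp [absD, ha]] at h1
          rw [show absD a (-1:ℝ) = 1 by simp [absD, ha]] at h2
          norm_num [absD_zero] at h1 h2
          rw [abs_le]
          constructor <;> linarith
        obtain ⟨z1, h1, h2⟩ := exists_mul_eq hlam e
        exact ⟨z1, h1, h2, fun h => (h ha).elim⟩
      · have hDa : ∀ s, absD a s = Real.sign a * s := fun s => if_neg ha
        have e : lam * Real.sign a = α - rho * Real.sign (a - b) := by
          have h1 := H 1 0
          have h2 := H (-1) 0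
          rw [hDab, hDa] at h1 h2
          simp [absD] at h1 h2
          linarith
        exact ⟨Real.sign a, abs_sign_le_one a, e, fun _ => rfl⟩
    have key2 : ∃ z2 : ℝ, |z2| ≤ 1 ∧ lam * z2 = β + rho * Real.sign (a - b) ∧
        (b ≠ 0 → z2 = Real.sign b) := by
      by_cases hb : b = 0
      · have e : |β + rho * Real.sign (a - b)| ≤ lam := by
          have h1 := H 0 1
          have h2 := H 0 (-1)
          rw [hDab] at h1 h2
          rw [show absD b (1:ℝ) = 1 by simp [absD, hb]] at h1
          rw [show absD b (-1:ℝ) = 1 by simp [absD, hb]] at h2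
          norm_num [absD_zero] at h1 h2
          rw [abs_le]
          constructor <;> linarith
        obtain ⟨z2, h1, h2⟩ := exists_mul_eq hlam e
        exact ⟨z2, h1, h2, fun h => (h hb).elim⟩
      · have hDb : ∀ s, absD b s = Real.sign b * s := fun s => if_neg hb
        have e : lam * Real.sign b = β + rho * Real.sign (a - b) := by
          have h1 := H 0 1
          have h2 := H 0 (-1)
          rw [hDab, hDb] at h1 h2
          simp [absD] at h1 h2
          linarith
        exact ⟨Real.sign b, abs_sign_le_one b, e, fun _ => rfl⟩
    obtain ⟨z1, hz1, hz1e, hz1s⟩ := key1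
    obtain ⟨z2, hz2, hz2e, hz2s⟩ := key2
    exact ⟨⟨z1, z2, Real.sign (a - b)⟩, hz1, hz2, abs_sign_le_one _,
      by rw [hz1e]; ring, by rw [hz2e]; ring, hz1s, hz2s, fun _ => rfl⟩

lemma slope_limit (g : ℝ → ℝ) (d L ε : ℝ) (hg : HasDerivAt g d 0) (hε : 0 < ε)
    (hineq : ∀ u : ℝ, 0 < u → u < ε → g 0 ≤ g u + u * L) : -L ≤ d := by
  have htend : Filter.Tendsto (slope g 0) (nhdsWithin 0 (Set.Ioi 0)) (nhds d) :=
    (hasDerivAt_iff_tendsto_slope.1 hg).mono_left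
      (nhdsWithin_mono 0 (fun x hx => Set.mem_compl_singleton_iff.2 (ne_of_gt hx)))
  refine ge_of_tendsto htend ?_
  filter_upwards [Ioo_mem_nhdsGT_of_mem (Set.mem_Ico.2 ⟨le_refl 0, hε⟩)] with u hu
  obtain ⟨hu0, huε⟩ := hu
  have h := hineq u hu0 huε
  rw [slope_def_field, le_div_iff₀ (by linarith : (0:ℝ) < u - 0)]
  nlinarith

lemma objFGL_two {p : ℕ} (S : Fin 2 → Matrix (Fin p) (Fin p) ℝ) (lam rho : ℝ)
    (Θ : Fin 2 → Matrix (Fin p) (Fin p) ℝ) :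
    objFGL S lam rho Θ =
      ((Matrix.trace (S 0 * Θ 0) - Real.log (Θ 0).det)
        + (Matrix.trace (S 1 * Θ 1) - Real.log (Θ 1).det))
      + lam * (l1Norm (offDiagPart (Θ 0)) + l1Norm (offDiagPart (Θ 1)))
      + rho * l1Norm (offDiagPart (Θ 0) - offDiagPart (Θ 1)) := by
  have h01 : (0 : Fin 2) < 1 := by decide
  have h00 : ¬((0 : Fin 2) < 0) := by decide
  have h10 : ¬((1 : Fin 2) < 0) := by decide
  have h11 : ¬((1 : Fin 2) < 1) := by decide
  simp [objFGL, Fin.sum_univ_two, h01, h00, h10, h11]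
  ring
lemma supNorm_le_one {p : ℕ} {Z : Matrix (Fin p) (Fin p) ℝ} (h : ∀ i j, |Z i j| ≤ 1) :
    supNorm Z ≤ 1 :=
  Real.iSup_le (fun i => Real.iSup_le (fun j => h i j) zero_le_one) zero_le_one

/-- KKT conditions for the two-group fused graphical lasso minimizer:
there exist subgradient matrices `Z₁, Z₂, Z₁₂` with zero diagonals, sup norm at most 1,
satisfying the stationarity equations and the sign conditions on the off-diagonal
nonzero entries. -/
theorem KKT_conditions_FGL
    (p : ℕ) (Shat : Fin 2 → Matrix (Fin p) (Fin p) ℝ) (hS : ∀ k, (Shat k).IsSymm)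
    (lam rho : ℝ) (hlam : 0 ≤ lam) (hrho : 0 ≤ rho)
    (Θhat : Fin 2 → Matrix (Fin p) (Fin p) ℝ) (hΘhat : ∀ k, (Θhat k).PosDef)
    (hmin : ∀ Θ : Fin 2 → Matrix (Fin p) (Fin p) ℝ, (∀ k, (Θ k).PosDef) →
        objFGL Shat lam rho Θhat ≤ objFGL Shat lam rho Θ) :
    ∃ Z₁ Z₂ Z₁₂ : Matrix (Fin p) (Fin p) ℝ,
      (∀ i, Z₁ i i = 0) ∧ (∀ i, Z₂ i i = 0) ∧ (∀ i, Z₁₂ i i = 0) ∧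
      supNorm Z₁ ≤ 1 ∧ supNorm Z₂ ≤ 1 ∧ supNorm Z₁₂ ≤ 1 ∧
      Shat 0 - (Θhat 0)⁻¹ + lam • Z₁ + rho • Z₁₂ = 0 ∧
      Shat 1 - (Θhat 1)⁻¹ + lam • Z₂ - rho • Z₁₂ = 0 ∧
      (∀ i j, i ≠ j → Θhat 0 i j ≠ 0 → Z₁ i j = Real.sign (Θhat 0 i j)) ∧
      (∀ i j, i ≠ j → Θhat 1 i j ≠ 0 → Z₂ i j = Real.sign (Θhat 1 i j)) ∧
      (∀ i j, i ≠ j → (Θhat 0 - Θhat 1) i j ≠ 0 →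
        Z₁₂ i j = Real.sign ((Θhat 0 - Θhat 1) i j)) := by
  have hTsym : ∀ (k : Fin 2) (i j : Fin p), Θhat k j i = Θhat k i j :=
    fun k => herm_entry (hΘhat k).1
  have hPsym : ∀ (k : Fin 2) (i j : Fin p), (Θhat k)⁻¹ j i = (Θhat k)⁻¹ i j :=
    fun k => herm_entry ((hΘhat k).inv).1
  have hSsym : ∀ (k : Fin 2) (i j : Fin p), Shat k j i = Shat k i j := by
    intro k i j
    have := congrFun (congrFun (hS k) i) j
    rwa [Matrix.transpose_apply] at this
  -- master lemma: positive definiteness of perturbations plus derivative of smooth part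
  have master : ∀ (E : Matrix (Fin p) (Fin p) ℝ), E.IsHermitian → ∀ c : Fin 2 → ℝ,
      ∃ ε > 0, (∀ u : ℝ, |u| < ε → ∀ k : Fin 2, (Θhat k + u • (c k • E)).PosDef) ∧
      HasDerivAt (fun u : ℝ =>
        (Matrix.trace (Shat 0 * (Θhat 0 + u • (c 0 • E)))
            - Real.log (Θhat 0 + u • (c 0 • E)).det)
        + (Matrix.trace (Shat 1 * (Θhat 1 + u • (c 1 • E)))
            - Real.log (Θhat 1 + u • (c 1 • E)).det))
        (c 0 * (Matrix.trace (Shat 0 * E) - Matrix.trace ((Θhat 0)⁻¹ * E))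
          + c 1 * (Matrix.trace (Shat 1 * E) - Matrix.trace ((Θhat 1)⁻¹ * E))) 0 := by
    intro E hE c
    obtain ⟨ε₀, hε₀, h₀⟩ := posDef_perturb (c 0 • E) (hΘhat 0) (herm_smul hE (c 0))
    obtain ⟨ε₁, hε₁, h₁⟩ := posDef_perturb (c 1 • E) (hΘhat 1) (herm_smul hE (c 1))
    refine ⟨min ε₀ ε₁, lt_min hε₀ hε₁, fun u hu k => ?_, ?_⟩
    · have hu0 := lt_of_lt_of_le hu (min_le_left ε₀ ε₁)
      have hu1 := lt_of_lt_of_le hu (min_le_right ε₀ ε₁)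
      fin_cases k
      · exact h₀ u hu0
      · exact h₁ u hu1
    · have d0 := hasDerivAt_smooth (Shat 0) (Θhat 0) (c 0 • E) (hΘhat 0)
      have d1 := hasDerivAt_smooth (Shat 1) (Θhat 1) (c 1 • E) (hΘhat 1)
      have hsum := d0.add d1
      refine HasDerivAt.congr_deriv hsum ?_
      rw [Matrix.mul_smul, Matrix.mul_smul, Matrix.mul_smul, Matrix.mul_smul,
        Matrix.trace_smul, Matrix.trace_smul, Matrix.trace_smul, Matrix.trace_smul,
        smul_eq_mul, smul_eq_mul, smul_eq_mul, smul_eq_mul]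
      ring
  -- diagonal stationarity
  have hdiag : ∀ (k : Fin 2) (i : Fin p), Shat k i i = (Θhat k)⁻¹ i i := by
    intro k i
    have main : ∀ c : Fin 2 → ℝ,
        0 ≤ c 0 * (Shat 0 i i - (Θhat 0)⁻¹ i i) + c 1 * (Shat 1 i i - (Θhat 1)⁻¹ i i) := by
      intro c
      obtain ⟨ε, hε, hPD, hDer⟩ := master (Matrix.single i i 1) (std_diag_herm i) c
      rw [trace_mul_std, trace_mul_std, trace_mul_std, trace_mul_std] at hDer
      have key := slope_limit _ _ 0 ε hDer hε ?_
      · linarith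
      · intro u hu0 huε
        have habs : |u| < ε := by rw [abs_of_pos hu0]; exact huε
        have hth := hmin (fun k' => Θhat k' + u • (c k' • Matrix.single i i 1))
          (fun k' => hPD u habs k')
        simp only [objFGL_two] at hth
        simp only [smul_smul, offDiagPart_add_smul_diag] at hth
        simp only [smul_smul, zero_mul, zero_smul, add_zero, mul_zero]
        linarith
    have h1 := main ![1, 0]
    have h2 := main ![-1, 0]
    have h3 := main ![0, 1]
    have h4 := main ![0, -1]
    norm_num [Matrix.cons_val_zero, Matrix.cons_val_one, Matrix.head_cons] at h1 h2 h3 h4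
    have e0 : Shat 0 i i = (Θhat 0)⁻¹ i i := by linarith
    have e1 : Shat 1 i i = (Θhat 1)⁻¹ i i := by linarith
    fin_cases k
    · exact e0
    · exact e1
  -- off-diagonal subgradient inequality
  have hH : ∀ (i j : Fin p), i ≠ j → ∀ s t : ℝ,
      ((Θhat 0)⁻¹ - Shat 0) i j * s + ((Θhat 1)⁻¹ - Shat 1) i j * t
        ≤ lam * absD (Θhat 0 i j) s + lam * absD (Θhat 1 i j) t
          + rho * absD (Θhat 0 i j - Θhat 1 i j) (s - t) := by
    intro i j hij s t
    obtain ⟨ε, hε, hPD, hDer⟩ := master (Eij i j) (Eij_herm i j) ![s, t]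
    simp only [Matrix.cons_val_zero, Matrix.cons_val_one, Matrix.head_cons] at hDer
    rw [trace_mul_Eij, trace_mul_Eij, trace_mul_Eij, trace_mul_Eij,
      hSsym 0 i j, hSsym 1 i j, hPsym 0 i j, hPsym 1 i j] at hDer
    obtain ⟨δ₁, hδ₁, hsl₁⟩ := absD_slope (Θhat 0 i j) s
    obtain ⟨δ₂, hδ₂, hsl₂⟩ := absD_slope (Θhat 1 i j) t
    obtain ⟨δ₃, hδ₃, hsl₃⟩ := absD_slope (Θhat 0 i j - Θhat 1 i j) (s - t)
    have od0 : ∀ c : ℝ, offDiagPart (Θhat 0 + c • Eij i j)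
        = offDiagPart (Θhat 0) + c • Eij i j := fun c => offDiagPart_add_smul_Eij _ hij c
    have od1 : ∀ c : ℝ, offDiagPart (Θhat 1 + c • Eij i j)
        = offDiagPart (Θhat 1) + c • Eij i j := fun c => offDiagPart_add_smul_Eij _ hij c
    have od0ij : offDiagPart (Θhat 0) i j = Θhat 0 i j := by
      rw [offDiagPart_apply, if_neg hij]
    have od0ji : offDiagPart (Θhat 0) j i = Θhat 0 i j := by
      rw [offDiagPart_apply, if_neg (Ne.symm hij), hTsym]
    have od1ij : offDiagPart (Θhat 1) i j = Θhat 1 i j := by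
      rw [offDiagPart_apply, if_neg hij]
    have od1ji : offDiagPart (Θhat 1) j i = Θhat 1 i j := by
      rw [offDiagPart_apply, if_neg (Ne.symm hij), hTsym]
    have odDij : (offDiagPart (Θhat 0) - offDiagPart (Θhat 1)) i j
        = Θhat 0 i j - Θhat 1 i j := by
      rw [Matrix.sub_apply, od0ij, od1ij]
    have odDji : (offDiagPart (Θhat 0) - offDiagPart (Θhat 1)) j i
        = Θhat 0 i j - Θhat 1 i j := by
      rw [Matrix.sub_apply, od0ji, od1ji]
    set εm := min ε (min δ₁ (min δ₂ δ₃)) with hεm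
    have key := slope_limit _ _
      (2 * (lam * absD (Θhat 0 i j) s) + 2 * (lam * absD (Θhat 1 i j) t)
        + 2 * (rho * absD (Θhat 0 i j - Θhat 1 i j) (s - t)))
      εm hDer (lt_min hε (lt_min hδ₁ (lt_min hδ₂ hδ₃))) ?_
    · rw [Matrix.sub_apply, Matrix.sub_apply]
      ring_nf at key ⊢
      linarith
    · intro u hu0 hue
      have huε : u < ε := lt_of_lt_of_le hue (min_le_left _ _)
      have huδ₁ : u < δ₁ :=
        lt_of_lt_of_le hue (le_trans (min_le_right _ _) (min_le_left _ _))
      have huδ₂ : u < δ₂ := lt_of_lt_of_le hue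
        (le_trans (min_le_right _ _) (le_trans (min_le_right _ _) (min_le_left _ _)))
      have huδ₃ : u < δ₃ := lt_of_lt_of_le hue
        (le_trans (min_le_right _ _) (le_trans (min_le_right _ _) (min_le_right _ _)))
      have habs : |u| < ε := by rw [abs_of_pos hu0]; exact huε
      have S1 := hsl₁ u hu0 huδ₁
      have S2 := hsl₂ u hu0 huδ₂
      have S3 := hsl₃ u hu0 huδ₃
      have hth := hmin (fun k' => Θhat k' + u • ((![s, t]) k' • Eij i j))
        (fun k' => hPD u habs k')
      simp only [objFGL_two, Matrix.cons_val_zero, Matrix.cons_val_one,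
        Matrix.head_cons] at hth
      simp only [smul_smul] at hth
      simp only [od0, od1] at hth
      have hfuse : (offDiagPart (Θhat 0) + (u * s) • Eij i j)
          - (offDiagPart (Θhat 1) + (u * t) • Eij i j)
          = (offDiagPart (Θhat 0) - offDiagPart (Θhat 1)) + (u * (s - t)) • Eij i j := by
        ext a b
        simp only [Matrix.sub_apply, Matrix.add_apply, Matrix.smul_apply, smul_eq_mul]
        ring
      rw [hfuse] at hth
      have EA : lam * (l1Norm (offDiagPart (Θhat 0) + (u * s) • Eij i j)
            + l1Norm (offDiagPart (Θhat 1) + (u * t) • Eij i j))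
          = lam * (l1Norm (offDiagPart (Θhat 0)) + l1Norm (offDiagPart (Θhat 1)))
            + u * (2 * (lam * absD (Θhat 0 i j) s) + 2 * (lam * absD (Θhat 1 i j) t)) := by
        rw [l1Norm_add_smul_Eij _ hij, l1Norm_add_smul_Eij _ hij, od0ij, od0ji, od1ij, od1ji]
        linear_combination (2 * lam) * S1 + (2 * lam) * S2
      have EB : rho * l1Norm ((offDiagPart (Θhat 0) - offDiagPart (Θhat 1))
            + (u * (s - t)) • Eij i j)
          = rho * l1Norm (offDiagPart (Θhat 0) - offDiagPart (Θhat 1))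
            + u * (2 * (rho * absD (Θhat 0 i j - Θhat 1 i j) (s - t))) := by
        rw [l1Norm_add_smul_Eij _ hij, odDij, odDji]
        linear_combination (2 * rho) * S3
      rw [EA, EB] at hth
      have EL : u * (2 * (lam * absD (Θhat 0 i j) s) + 2 * (lam * absD (Θhat 1 i j) t)
            + 2 * (rho * absD (Θhat 0 i j - Θhat 1 i j) (s - t)))
          = u * (2 * (lam * absD (Θhat 0 i j) s) + 2 * (lam * absD (Θhat 1 i j) t))
            + u * (2 * (rho * absD (Θhat 0 i j - Θhat 1 i j) (s - t))) := by ring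
      simp only [smul_smul, zero_mul, zero_smul, add_zero]
      linarith [hth, EL]
  -- construct the subgradient matrices entrywise
  have hkey : ∀ i j : Fin p, i ≠ j → ∃ z : ℝ × ℝ × ℝ,
      |z.1| ≤ 1 ∧ |z.2.1| ≤ 1 ∧ |z.2.2| ≤ 1 ∧
      lam * z.1 + rho * z.2.2 = ((Θhat 0)⁻¹ - Shat 0) i j ∧
      lam * z.2.1 - rho * z.2.2 = ((Θhat 1)⁻¹ - Shat 1) i j ∧
      (Θhat 0 i j ≠ 0 → z.1 = Real.sign (Θhat 0 i j)) ∧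
      (Θhat 1 i j ≠ 0 → z.2.1 = Real.sign (Θhat 1 i j)) ∧
      (Θhat 0 i j - Θhat 1 i j ≠ 0 → z.2.2 = Real.sign (Θhat 0 i j - Θhat 1 i j)) :=
    fun i j hij => scalar_KKT lam rho _ _ _ _ hlam hrho (hH i j hij)
  refine ⟨(fun i j => if h : i ≠ j then (hkey i j h).choose.1 else 0),
    (fun i j => if h : i ≠ j then (hkey i j h).choose.2.1 else 0),
    (fun i j => if h : i ≠ j then (hkey i j h).choose.2.2 else 0),
    fun i => dif_neg (not_not_intro rfl), fun i => dif_neg (not_not_intro rfl),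
    fun i => dif_neg (not_not_intro rfl), ?_, ?_, ?_, ?_, ?_, ?_, ?_, ?_⟩
  · apply supNorm_le_one
    intro i j
    by_cases h : i ≠ j
    · rw [dif_pos h]; exact (hkey i j h).choose_spec.1
    · rw [dif_neg h]; simp
  · apply supNorm_le_one
    intro i j
    by_cases h : i ≠ j
    · rw [dif_pos h]; exact (hkey i j h).choose_spec.2.1
    · rw [dif_neg h]; simp
  · apply supNorm_le_one
    intro i j
    by_cases h : i ≠ j
    · rw [dif_pos h]; exact (hkey i j h).choose_spec.2.2.1
    · rw [dif_neg h]; simp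
  · ext i j
    simp only [Matrix.add_apply, Matrix.sub_apply, Matrix.smul_apply, smul_eq_mul,
      Matrix.zero_apply]
    show Shat 0 i j - (Θhat 0)⁻¹ i j + lam * _ + rho * _ = 0
    beta_reduce
    by_cases h : i ≠ j
    · rw [dif_pos h, dif_pos h]
      have h1 := (hkey i j h).choose_spec.2.2.2.1
      have h2 : ((Θhat 0)⁻¹ - Shat 0) i j = (Θhat 0)⁻¹ i j - Shat 0 i j :=
        Matrix.sub_apply _ _ _ _
      simp only [Matrix.sub_apply] at h1
      linarith
    · rw [dif_neg h, dif_neg h]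
      push_neg at h
      subst h
      have := hdiag 0 i
      linarith
  · ext i j
    simp only [Matrix.add_apply, Matrix.sub_apply, Matrix.smul_apply, smul_eq_mul,
      Matrix.zero_apply]
    show Shat 1 i j - (Θhat 1)⁻¹ i j + lam * _ - rho * _ = 0
    beta_reduce
    by_cases h : i ≠ j
    · rw [dif_pos h, dif_pos h]
      have h1 := (hkey i j h).choose_spec.2.2.2.2.1
      have h2 : ((Θhat 1)⁻¹ - Shat 1) i j = (Θhat 1)⁻¹ i j - Shat 1 i j :=
        Matrix.sub_apply _ _ _ _
      simp only [Matrix.sub_apply] at h1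
      linarith
    · rw [dif_neg h, dif_neg h]
      push_neg at h
      subst h
      have := hdiag 1 i
      linarith
  · intro i j hij hne
    have h := (hkey i j hij).choose_spec.2.2.2.2.2.1 hne
    simpa [dif_pos hij] using h
  · intro i j hij hne
    have h := (hkey i j hij).choose_spec.2.2.2.2.2.2.1 hne
    simpa [dif_pos hij] using h
  · intro i j hij hne
    rw [Matrix.sub_apply] at hne ⊢
    have h := (hkey i j hij).choose_spec.2.2.2.2.2.2.2 hne
    simpa [dif_pos hij] using h
end
end

section
/- Let A be a symmetric positive semidefinite p×p real matrix such that every column of A has at most d+1 nonzero entries, where d ≥ 0 is an integer. Then the ℓ₁-operator norm of A satisfies |||A|||₁ ≤ √(d+1) · Λ_max(A), where Λ_max(A) is the largest eigenvalue of A. -/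
open Matrix
open scoped BigOperators Classical

noncomputable section

/-- If `A` is symmetric positive semidefinite and every column of `A` has
at most `d+1` nonzero entries, then `|||A|||₁ ≤ √(d+1) · Λ_max(A)`. -/
theorem opNorm1_le_sqrt_card_mul_eigMax
    (p d : ℕ) (A : Matrix (Fin p) (Fin p) ℝ) (hA : A.PosSemidef)
    (hcol : ∀ j, (Finset.univ.filter (fun i => A i j ≠ 0)).card ≤ d + 1) :
    opNorm1 A ≤ Real.sqrt ((d : ℝ) + 1) * ⨆ i, hA.1.eigenvalues i := by
  by_cases hp : p = 0
  · subst hp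
    simp [opNorm1]
  · haveI : Nonempty (Fin p) := Fin.pos_iff_nonempty.mp (Nat.pos_of_ne_zero hp)
    set μ := ⨆ i, hA.1.eigenvalues i with hμdef
    have hbdd : BddAbove (Set.range hA.1.eigenvalues) :=
      Set.Finite.bddAbove (Set.finite_range _)
    have hle : ∀ i, hA.1.eigenvalues i ≤ μ := fun i => le_ciSup hbdd i
    have hμ0 : 0 ≤ μ :=
      le_trans (hA.eigenvalues_nonneg (Classical.arbitrary _)) (hle _)
    have key : ∀ j, ∑ i, (A i j) ^ 2 ≤ μ ^ 2 := by
      intro j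
      set U : Matrix (Fin p) (Fin p) ℝ :=
        (hA.1.eigenvectorUnitary : Matrix (Fin p) (Fin p) ℝ) with hUdef
      set lam := hA.1.eigenvalues with hlam
      have hspec : A = U * Matrix.diagonal lam * star U := by
        simpa using hA.1.spectral_theorem
      have hsUU : star U * U = 1 := Unitary.coe_star_mul_self hA.1.eigenvectorUnitary
      have hUUs : U * star U = 1 := Unitary.coe_mul_star_self hA.1.eigenvectorUnitary
      have hA2 : A * A = U * Matrix.diagonal (fun k => lam k ^ 2) * star U := by
        conv_lhs => rw [hspec]
        simp only [Matrix.mul_assoc]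
        rw [← Matrix.mul_assoc (star U) U, hsUU, Matrix.one_mul,
          ← Matrix.mul_assoc (Matrix.diagonal lam) (Matrix.diagonal lam),
          Matrix.diagonal_mul_diagonal]
        congr 2
        ext k; ring
      have hsymm : ∀ i, A j i = A i j := by
        intro i
        have hh := hA.1
        rw [Matrix.IsHermitian] at hh
        conv_lhs => rw [← hh]
        simp [Matrix.conjTranspose_apply]
      have h1 : ∑ i, (A i j) ^ 2 = (A * A) j j := by
        rw [Matrix.mul_apply]
        exact Finset.sum_congr rfl fun i _ => by rw [hsymm i]; ring
      have h2 : (A * A) j j = ∑ k, (U j k) ^ 2 * lam k ^ 2 := by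
        rw [hA2, Matrix.mul_apply]
        refine Finset.sum_congr rfl fun k _ => ?_
        rw [Matrix.mul_diagonal]
        simp [Matrix.star_apply]
        ring
      have hUnorm : ∑ k, (U j k) ^ 2 = 1 := by
        have h3 := congrArg (fun M => M j j) hUUs
        simp only [Matrix.mul_apply, Matrix.one_apply_eq] at h3
        rw [← h3]
        refine Finset.sum_congr rfl fun k _ => ?_
        simp [Matrix.star_apply]
        ring
      rw [h1, h2]
      calc ∑ k, (U j k) ^ 2 * lam k ^ 2 ≤ ∑ k, (U j k) ^ 2 * μ ^ 2 := by
            refine Finset.sum_le_sum fun k _ => ?_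
            have h0 : (0:ℝ) ≤ lam k := hA.eigenvalues_nonneg k
            exact mul_le_mul_of_nonneg_left (pow_le_pow_left₀ h0 (hle k) 2) (sq_nonneg _)
        _ = μ ^ 2 := by rw [← Finset.sum_mul, hUnorm, one_mul]
    have colbound : ∀ j, ∑ i, |A i j| ≤ Real.sqrt ((d : ℝ) + 1) * μ := by
      intro j
      set s := Finset.univ.filter (fun i => A i j ≠ 0) with hs
      have hsum : ∑ i, |A i j| = ∑ i ∈ s, |A i j| := by
        symm
        apply Finset.sum_subset (Finset.subset_univ _)
        intro i _ hi
        simp only [hs, Finset.mem_filter, Finset.mem_univ, true_and, not_not] at hi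
        rw [hi, abs_zero]
      have hcs : (∑ i ∈ s, |A i j|) ^ 2 ≤ (s.card : ℝ) * ∑ i ∈ s, |A i j| ^ 2 :=
        sq_sum_le_card_mul_sum_sq
      have habs : ∑ i ∈ s, |A i j| ^ 2 ≤ μ ^ 2 := by
        calc ∑ i ∈ s, |A i j| ^ 2 = ∑ i ∈ s, (A i j) ^ 2 := by
              exact Finset.sum_congr rfl fun i _ => sq_abs _
          _ ≤ ∑ i, (A i j) ^ 2 :=
              Finset.sum_le_sum_of_subset_of_nonneg (Finset.subset_univ _)
                (fun i _ _ => sq_nonneg _)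
          _ ≤ μ ^ 2 := key j
      have hcard : (s.card : ℝ) ≤ (d : ℝ) + 1 := by exact_mod_cast hcol j
      have hfin : (∑ i, |A i j|) ^ 2 ≤ ((d : ℝ) + 1) * μ ^ 2 := by
        rw [hsum]
        calc (∑ i ∈ s, |A i j|) ^ 2 ≤ (s.card : ℝ) * ∑ i ∈ s, |A i j| ^ 2 := hcs
          _ ≤ ((d : ℝ) + 1) * μ ^ 2 := by
              apply mul_le_mul hcard habs
              · exact Finset.sum_nonneg fun i _ => sq_nonneg _
              · positivity
      have hnn : 0 ≤ ∑ i, |A i j| := Finset.sum_nonneg fun i _ => abs_nonneg _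
      calc ∑ i, |A i j| ≤ Real.sqrt (((d : ℝ) + 1) * μ ^ 2) :=
            (Real.le_sqrt hnn (by positivity)).mpr hfin
        _ = Real.sqrt ((d : ℝ) + 1) * μ := by
            rw [Real.sqrt_mul (by positivity), Real.sqrt_sq hμ0]
    exact ciSup_le colbound
end
end

section
/- For k = 1, 2, let Θ̂⁽ᵏ⁾, Θ₀⁽ᵏ⁾, Σ̂⁽ᵏ⁾, Σ₀⁽ᵏ⁾ be symmetric p×p real matrices with Σ₀⁽ᵏ⁾ invertible and Θ₀⁽ᵏ⁾ = (Σ₀⁽ᵏ⁾)⁻¹, and suppose there exist matrices Z_k with ‖Z_k‖_∞ ≤ 1 and real numbers μ_k ≥ 0 such that I − Σ̂⁽ᵏ⁾Θ̂⁽ᵏ⁾ = μ_k Z_k Θ̂⁽ᵏ⁾. Define Υ⁽ᵏ⁾ = −(Θ̂⁽ᵏ⁾ − Θ₀⁽ᵏ⁾)(Σ̂⁽ᵏ⁾ − Σ₀⁽ᵏ⁾)Θ₀⁽ᵏ⁾ − (Θ̂⁽ᵏ⁾Σ̂⁽ᵏ⁾ − I)(Θ̂⁽ᵏ⁾ − Θ₀⁽ᵏ⁾).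 Then ‖Υ⁽¹⁾ − Υ⁽²⁾‖_∞ ≤ Σ_{k=1}² |||Θ̂⁽ᵏ⁾ − Θ₀⁽ᵏ⁾|||₁ ( ‖Σ̂⁽ᵏ⁾ − Σ₀⁽ᵏ⁾‖_∞ |||Θ₀⁽ᵏ⁾|||₁ + μ_k |||Θ̂⁽ᵏ⁾|||₁ ). -/
open Matrix
open scoped BigOperators Classical

noncomputable section

section Helpers

variable {p : ℕ}

lemma supNorm_nonneg (A : Matrix (Fin p) (Fin p) ℝ) : 0 ≤ supNorm A := by
  apply Real.iSup_nonneg; intro i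
  exact Real.iSup_nonneg (fun j => abs_nonneg _)

lemma entry_le_supNorm (A : Matrix (Fin p) (Fin p) ℝ) (i j : Fin p) :
    |A i j| ≤ supNorm A := by
  have h1 : |A i j| ≤ ⨆ j, |A i j| :=
    le_ciSup (f := fun j => |A i j|) (Set.Finite.bddAbove (Set.finite_range _)) j
  exact h1.trans
    (le_ciSup (f := fun i => ⨆ j, |A i j|) (Set.Finite.bddAbove (Set.finite_range _)) i)

lemma supNorm_le {A : Matrix (Fin p) (Fin p) ℝ} {c : ℝ} (hc : 0 ≤ c)
    (h : ∀ i j, |A i j| ≤ c) : supNorm A ≤ c :=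
  Real.iSup_le (fun i => Real.iSup_le (h i) hc) hc

lemma opNorm1_nonneg (A : Matrix (Fin p) (Fin p) ℝ) : 0 ≤ opNorm1 A :=
  Real.iSup_nonneg (fun j => Finset.sum_nonneg fun _ _ => abs_nonneg _)

lemma colsum_le_opNorm1 (A : Matrix (Fin p) (Fin p) ℝ) (j : Fin p) :
    ∑ i, |A i j| ≤ opNorm1 A :=
  le_ciSup (f := fun j => ∑ i, |A i j|) (Set.Finite.bddAbove (Set.finite_range _)) j

lemma supNorm_transpose (A : Matrix (Fin p) (Fin p) ℝ) :
    supNorm Aᵀ = supNorm A := by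
  apply le_antisymm
  · exact supNorm_le (supNorm_nonneg A) (fun i j => entry_le_supNorm A j i)
  · exact supNorm_le (supNorm_nonneg Aᵀ) (fun i j => entry_le_supNorm Aᵀ j i)

lemma supNorm_neg (A : Matrix (Fin p) (Fin p) ℝ) : supNorm (-A) = supNorm A := by
  simp [supNorm, Matrix.neg_apply, abs_neg]

lemma supNorm_sub_le (A B : Matrix (Fin p) (Fin p) ℝ) :
    supNorm (A - B) ≤ supNorm A + supNorm B := by
  apply supNorm_le (add_nonneg (supNorm_nonneg A) (supNorm_nonneg B))
  intro i j
  calc |(A - B) i j| = |A i j - B i j| := by simp [Matrix.sub_apply]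
    _ ≤ |A i j| + |B i j| := abs_sub _ _
    _ ≤ supNorm A + supNorm B :=
        add_le_add (entry_le_supNorm A i j) (entry_le_supNorm B i j)

lemma supNorm_smul_le {μ : ℝ} (hμ : 0 ≤ μ) (A : Matrix (Fin p) (Fin p) ℝ) :
    supNorm (μ • A) ≤ μ * supNorm A := by
  apply supNorm_le (mul_nonneg hμ (supNorm_nonneg A))
  intro i j
  calc |(μ • A) i j| = μ * |A i j| := by
        simp [Matrix.smul_apply, abs_mul, abs_of_nonneg hμ]
    _ ≤ μ * supNorm A := mul_le_mul_of_nonneg_left (entry_le_supNorm A i j) hμ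

lemma supNorm_mul_le_right (A B : Matrix (Fin p) (Fin p) ℝ) :
    supNorm (A * B) ≤ supNorm A * opNorm1 B := by
  apply supNorm_le (mul_nonneg (supNorm_nonneg A) (opNorm1_nonneg B))
  intro i j
  calc |(A * B) i j| = |∑ k, A i k * B k j| := by simp [Matrix.mul_apply]
    _ ≤ ∑ k, |A i k * B k j| := Finset.abs_sum_le_sum_abs _ _
    _ ≤ ∑ k, supNorm A * |B k j| := by
        apply Finset.sum_le_sum
        intro k _
        rw [abs_mul]
        exact mul_le_mul_of_nonneg_right (entry_le_supNorm A i k) (abs_nonneg _)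
    _ = supNorm A * ∑ k, |B k j| := by rw [Finset.mul_sum]
    _ ≤ supNorm A * opNorm1 B :=
        mul_le_mul_of_nonneg_left (colsum_le_opNorm1 B j) (supNorm_nonneg A)

lemma supNorm_mul_le_left (A B : Matrix (Fin p) (Fin p) ℝ) :
    supNorm (A * B) ≤ opNorm1 Aᵀ * supNorm B := by
  apply supNorm_le (mul_nonneg (opNorm1_nonneg _) (supNorm_nonneg B))
  intro i j
  calc |(A * B) i j| = |∑ k, A i k * B k j| := by simp [Matrix.mul_apply]
    _ ≤ ∑ k, |A i k * B k j| := Finset.abs_sum_le_sum_abs _ _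
    _ ≤ ∑ k, |A i k| * supNorm B := by
        apply Finset.sum_le_sum
        intro k _
        rw [abs_mul]
        exact mul_le_mul_of_nonneg_left (entry_le_supNorm B k j) (abs_nonneg _)
    _ = (∑ k, |Aᵀ k i|) * supNorm B := by rw [Finset.sum_mul]; rfl
    _ ≤ opNorm1 Aᵀ * supNorm B :=
        mul_le_mul_of_nonneg_right (colsum_le_opNorm1 Aᵀ i) (supNorm_nonneg B)

end Helpers

/-- Bound on the supremum norm of the difference of the two remainder
terms `Υ⁽ᵏ⁾ = −(Θ̂⁽ᵏ⁾ − Θ₀⁽ᵏ⁾)(Σ̂⁽ᵏ⁾ − Σ₀⁽ᵏ⁾)Θ₀⁽ᵏ⁾ − (Θ̂⁽ᵏ⁾Σ̂⁽ᵏ⁾ − I)(Θ̂⁽ᵏ⁾ − Θ₀⁽ᵏ⁾)`,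
given KKT-type identities `I − Σ̂⁽ᵏ⁾Θ̂⁽ᵏ⁾ = μ_k Z_k Θ̂⁽ᵏ⁾` with `‖Z_k‖_∞ ≤ 1`, `μ_k ≥ 0`. -/
theorem remainder_difference_bound
    (p : ℕ)
    (Θhat Θ₀ Shat S0 Z : Fin 2 → Matrix (Fin p) (Fin p) ℝ) (μ : Fin 2 → ℝ)
    (hΘhat_symm : ∀ k, (Θhat k).IsSymm) (hΘ₀_symm : ∀ k, (Θ₀ k).IsSymm)
    (hShat_symm : ∀ k, (Shat k).IsSymm) (hS0_symm : ∀ k, (S0 k).IsSymm)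
    (hS0 : ∀ k, IsUnit (S0 k).det)
    (hΘ₀ : ∀ k, Θ₀ k = (S0 k)⁻¹)
    (hZ : ∀ k, supNorm (Z k) ≤ 1)
    (hμ : ∀ k, 0 ≤ μ k)
    (hKKT : ∀ k, (1 : Matrix (Fin p) (Fin p) ℝ) - Shat k * Θhat k = μ k • (Z k * Θhat k)) :
    supNorm
        ((-((Θhat 0 - Θ₀ 0) * (Shat 0 - S0 0) * Θ₀ 0)
            - (Θhat 0 * Shat 0 - 1) * (Θhat 0 - Θ₀ 0))
          - (-((Θhat 1 - Θ₀ 1) * (Shat 1 - S0 1) * Θ₀ 1)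
            - (Θhat 1 * Shat 1 - 1) * (Θhat 1 - Θ₀ 1)))
      ≤ ∑ k, opNorm1 (Θhat k - Θ₀ k) *
          (supNorm (Shat k - S0 k) * opNorm1 (Θ₀ k) + μ k * opNorm1 (Θhat k)) := by
  -- Bound for each k separately
  have key : ∀ k, supNorm (-((Θhat k - Θ₀ k) * (Shat k - S0 k) * Θ₀ k)
        - (Θhat k * Shat k - 1) * (Θhat k - Θ₀ k))
      ≤ opNorm1 (Θhat k - Θ₀ k) *
          (supNorm (Shat k - S0 k) * opNorm1 (Θ₀ k) + μ k * opNorm1 (Θhat k)) := by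
    intro k
    set D := Θhat k - Θ₀ k with hD
    have hDsymm : Dᵀ = D := by
      rw [hD, Matrix.transpose_sub, hΘhat_symm k, hΘ₀_symm k]
    -- KKT transposed: Θhat * Shat - 1 = -(μ • (Θhat * Zᵀ))
    have hkkt2 : Θhat k * Shat k - 1 = -(μ k • (Θhat k * (Z k)ᵀ)) := by
      have h := congrArg Matrix.transpose (hKKT k)
      simp only [Matrix.transpose_sub, Matrix.transpose_one, Matrix.transpose_smul,
        Matrix.transpose_mul, hΘhat_symm k, hShat_symm k] at h
      rw [show (Θhat k).transpose = Θhat k from hΘhat_symm k,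
        show (Shat k).transpose = Shat k from hShat_symm k] at h
      linear_combination (norm := abel) -h
    -- term 1 bound
    have hT1 : supNorm (D * (Shat k - S0 k) * Θ₀ k)
        ≤ opNorm1 D * (supNorm (Shat k - S0 k) * opNorm1 (Θ₀ k)) := by
      calc supNorm (D * (Shat k - S0 k) * Θ₀ k)
          = supNorm (D * ((Shat k - S0 k) * Θ₀ k)) := by rw [Matrix.mul_assoc]
        _ ≤ opNorm1 Dᵀ * supNorm ((Shat k - S0 k) * Θ₀ k) := supNorm_mul_le_left _ _
        _ = opNorm1 D * supNorm ((Shat k - S0 k) * Θ₀ k) := by rw [hDsymm]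
        _ ≤ opNorm1 D * (supNorm (Shat k - S0 k) * opNorm1 (Θ₀ k)) :=
            mul_le_mul_of_nonneg_left (supNorm_mul_le_right _ _) (opNorm1_nonneg D)
    -- term 2 bound
    have hZt : supNorm ((Z k)ᵀ) ≤ 1 := by rw [supNorm_transpose]; exact hZ k
    have hT2 : supNorm ((Θhat k * Shat k - 1) * D)
        ≤ opNorm1 D * (μ k * opNorm1 (Θhat k)) := by
      have e1 : (Θhat k * Shat k - 1) * D = -(μ k • (Θhat k * ((Z k)ᵀ * D))) := by
        rw [hkkt2]; simp [Matrix.smul_mul, Matrix.mul_assoc]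
      rw [e1, supNorm_neg]
      calc supNorm (μ k • (Θhat k * ((Z k)ᵀ * D)))
          ≤ μ k * supNorm (Θhat k * ((Z k)ᵀ * D)) := supNorm_smul_le (hμ k) _
        _ ≤ μ k * (opNorm1 (Θhat k)ᵀ * supNorm ((Z k)ᵀ * D)) :=
            mul_le_mul_of_nonneg_left (supNorm_mul_le_left _ _) (hμ k)
        _ = μ k * (opNorm1 (Θhat k) * supNorm ((Z k)ᵀ * D)) := by
            rw [show (Θhat k).transpose = Θhat k from hΘhat_symm k]
        _ ≤ μ k * (opNorm1 (Θhat k) * (supNorm ((Z k)ᵀ) * opNorm1 D)) := by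
            apply mul_le_mul_of_nonneg_left _ (hμ k)
            exact mul_le_mul_of_nonneg_left (supNorm_mul_le_right _ _) (opNorm1_nonneg _)
        _ ≤ μ k * (opNorm1 (Θhat k) * (1 * opNorm1 D)) := by
            apply mul_le_mul_of_nonneg_left _ (hμ k)
            apply mul_le_mul_of_nonneg_left _ (opNorm1_nonneg _)
            exact mul_le_mul_of_nonneg_right hZt (opNorm1_nonneg D)
        _ = opNorm1 D * (μ k * opNorm1 (Θhat k)) := by ring
    calc supNorm (-(D * (Shat k - S0 k) * Θ₀ k) - (Θhat k * Shat k - 1) * D)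
        ≤ supNorm (-(D * (Shat k - S0 k) * Θ₀ k))
            + supNorm ((Θhat k * Shat k - 1) * D) := supNorm_sub_le _ _
      _ = supNorm (D * (Shat k - S0 k) * Θ₀ k)
            + supNorm ((Θhat k * Shat k - 1) * D) := by rw [supNorm_neg]
      _ ≤ opNorm1 D * (supNorm (Shat k - S0 k) * opNorm1 (Θ₀ k))
            + opNorm1 D * (μ k * opNorm1 (Θhat k)) := add_le_add hT1 hT2
      _ = opNorm1 D * (supNorm (Shat k - S0 k) * opNorm1 (Θ₀ k)
            + μ k * opNorm1 (Θhat k)) := by ring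
  calc supNorm _ ≤ _ + _ := supNorm_sub_le _ _
    _ ≤ _ := add_le_add (key 0) (key 1)
    _ = ∑ k, opNorm1 (Θhat k - Θ₀ k) *
          (supNorm (Shat k - S0 k) * opNorm1 (Θ₀ k) + μ k * opNorm1 (Θhat k)) := by
        rw [Fin.sum_univ_two]
end
end
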